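/- Let A be an n×n Hermitian matrix with A𝟙ₙ = 0, let Â = [[0, 𝟙ₙᵀ],[𝟙ₙ, A]], and let u be any non-conical vertex. Then the amplitude at the conical vertex satisfies ⟨e₀, exp(-iÂt)·e_u⟩ = -(i/√n)·sin(√n·t) for all real t. -/

import Mathlib

open Matrix

/-- The cone `K₁ + X`: border a Hermitian matrix `A` with a new vertex joined
to all vertices with weight 1. -/
noncomputable def cone {n : ℕ} (A : Matrix (Fin n) (Fin n) ℂ) :
    Matrix (Fin (n + 1)) (Fin (n + 1)) ℂ :=
  Matrix.of fun i j =>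
    Fin.cases (Fin.cases 0 (fun _ => 1) j)
      (fun i' => Fin.cases 1 (fun j' => A i' j') j) i

section aux
variable {n : ℕ} (A : Matrix (Fin n) (Fin n) ℂ)

noncomputable def wvec : Fin (n + 1) → ℂ := Fin.cases 0 (fun _ => 1)

lemma row0 : Pi.single (0 : Fin (n+1)) (1:ℂ) ᵥ* cone A = wvec := by
  rw [Matrix.single_one_vecMul]
  ext j
  induction j using Fin.cases <;> simp [cone, wvec]

lemma roww (hA : A.IsHermitian) (h1 : A *ᵥ (fun _ => (1 : ℂ)) = 0) :
    wvec ᵥ* cone A = (n : ℂ) • (Pi.single (0 : Fin (n+1)) (1:ℂ) : Fin (n+1) → ℂ) := by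
  have hcol : ∀ j' : Fin n, ∑ i' : Fin n, A i' j' = 0 := by
    intro j'
    have : ∀ i', A i' j' = star (A j' i') := by
      intro i'; conv_lhs => rw [← hA]
      rfl
    simp_rw [this, ← star_sum]
    have := congrFun h1 j'
    simpa [Matrix.mulVec, dotProduct] using congrArg star this
  ext j
  induction j using Fin.cases with
  | zero =>
      simp [Matrix.vecMul, dotProduct, wvec, Fin.sum_univ_succ, cone]
  | succ j' =>
      simp [Matrix.vecMul, dotProduct, wvec, Fin.sum_univ_succ, cone,
        Fin.succ_ne_zero, hcol j']
end aux

section aux2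
variable {n : ℕ} (A : Matrix (Fin n) (Fin n) ℂ)

lemma rowpow (hA : A.IsHermitian) (h1 : A *ᵥ (fun _ => (1 : ℂ)) = 0) (k : ℕ) :
    (Pi.single (0 : Fin (n+1)) (1:ℂ) ᵥ* (cone A)^(2*k)
        = ((n:ℂ)^k) • (Pi.single (0 : Fin (n+1)) (1:ℂ) : Fin (n+1) → ℂ)) ∧
    (Pi.single (0 : Fin (n+1)) (1:ℂ) ᵥ* (cone A)^(2*k+1) = ((n:ℂ)^k) • wvec) := by
  induction k with
  | zero => simp [row0 A]
  | succ k ih =>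
      have heven : Pi.single (0 : Fin (n+1)) (1:ℂ) ᵥ* (cone A)^(2*(k+1))
          = ((n:ℂ)^(k+1)) • (Pi.single (0 : Fin (n+1)) (1:ℂ) : Fin (n+1) → ℂ) := by
        have : 2*(k+1) = (2*k+1) + 1 := by ring
        rw [this, pow_succ, ← Matrix.vecMul_vecMul, ih.2, Matrix.smul_vecMul,
          roww A hA h1, smul_smul, ← pow_succ]
      refine ⟨heven, ?_⟩
      rw [pow_succ, ← Matrix.vecMul_vecMul, heven, Matrix.smul_vecMul, row0 A]
end aux2

/-- starting the quantum walk on the cone at any non-conical vertex `u`,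
the amplitude at the conical vertex is `⟨e₀, exp(-iÂt)·e_u⟩ = -(i/√n)·sin(√n·t)`. -/
theorem stmt2 {n : ℕ} (A : Matrix (Fin n) (Fin n) ℂ)
    (hA : A.IsHermitian)
    (h1 : A *ᵥ (fun _ => (1 : ℂ)) = 0) (u : Fin n) (t : ℝ) :
    (NormedSpace.exp ((-(Complex.I * (t : ℂ))) • cone A) *ᵥ Pi.single u.succ 1) 0
      = -(Complex.I / ((Real.sqrt n : ℝ) : ℂ)) * ((Real.sin (Real.sqrt n * t) : ℝ) : ℂ) := by
  classical
  have hn : 0 < n := u.pos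
  set B := cone A with hB
  set c : ℂ := -(Complex.I * t) with hc
  set s : ℂ := ((Real.sqrt n : ℝ) : ℂ) with hsdef
  have hs2 : s ^ 2 = (n : ℂ) := by
    rw [hsdef, ← Complex.ofReal_pow, Real.sq_sqrt (Nat.cast_nonneg n)]
    norm_num
  have hsne : s ≠ 0 := by
    rw [hsdef]
    simp only [ne_eq, Complex.ofReal_eq_zero]
    positivity
  letI : NormedRing (Matrix (Fin (n+1)) (Fin (n+1)) ℂ) := Matrix.linftyOpNormedRing
  letI : NormedAlgebra ℂ (Matrix (Fin (n+1)) (Fin (n+1)) ℂ) := Matrix.linftyOpNormedAlgebra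
  have hsum : HasSum (fun k : ℕ => ((Nat.factorial k : ℂ))⁻¹ • (c • B) ^ k)
      (NormedSpace.exp (c • B)) := by
    rw [NormedSpace.exp_eq_tsum ℂ]
    exact (NormedSpace.expSeries_summable' (𝕂 := ℂ) (c • B)).hasSum
  let φ : Matrix (Fin (n+1)) (Fin (n+1)) ℂ →ₗ[ℂ] ℂ :=
    { toFun := fun N => N 0 u.succ
      map_add' := fun _ _ => rfl
      map_smul' := fun _ _ => rfl }
  have hφc : Continuous φ := LinearMap.continuous_of_finiteDimensional φ
  have hsum2 : HasSum (fun k : ℕ => ((Nat.factorial k : ℂ))⁻¹ * (((c • B) ^ k) 0 u.succ))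
      (NormedSpace.exp (c • B) 0 u.succ) := by
    have := hsum.map φ.toAddMonoidHom hφc
    exact this
  set f : ℕ → ℂ := fun k => ((Nat.factorial k : ℂ))⁻¹ * (((c • B) ^ k) 0 u.succ) with hf
  have hentry : ∀ k : ℕ, (B ^ k) 0 u.succ = (Pi.single (0 : Fin (n+1)) (1:ℂ) ᵥ* B ^ k) u.succ := by
    intro k
    rw [Matrix.single_one_vecMul]
    rfl
  have heq : ∀ m : ℕ, f (2*m+1)
      = -(Complex.I / s) * ((-1 : ℂ)^m * (s * t)^(2*m+1) / (Nat.factorial (2*m+1) : ℂ)) := by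
    intro m
    have hodd : (B ^ (2*m+1)) 0 u.succ = (n : ℂ)^m := by
      rw [hentry, (rowpow A hA h1 m).2]
      simp [wvec]
    have hcpow : ((c • B) ^ (2*m+1)) 0 u.succ = c^(2*m+1) * (n:ℂ)^m := by
      rw [smul_pow, Matrix.smul_apply, hodd, smul_eq_mul]
    show (Nat.factorial (2*m+1) : ℂ)⁻¹ * (((c • B) ^ (2*m+1)) 0 u.succ) = _
    rw [hcpow]
    have h2 : c^(2*m+1) = -((Complex.I^2)^m * Complex.I * (t:ℂ)^(2*m+1)) := by
      rw [hc, Odd.neg_pow ⟨m, by ring⟩, mul_pow, pow_succ, pow_mul]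
    have h3 : (s * t)^(2*m+1) = (s^2)^m * s * (t:ℂ)^(2*m+1) := by
      rw [mul_pow, pow_succ, pow_mul]
    rw [h2, Complex.I_sq, h3, hs2]
    rw [div_eq_mul_inv Complex.I s]
    field_simp [hsne]
  have hvanish : ∀ k ∉ Set.range (fun m : ℕ => 2*m+1), f k = 0 := by
    intro k hk
    have hkeven : Even k := by
      rcases Nat.even_or_odd k with h | h
      · exact h
      · obtain ⟨m, hm⟩ := h
        exact absurd ⟨m, by simpa using hm.symm⟩ hk
    obtain ⟨m, hm⟩ := hkeven
    have : k = 2*m := by omega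
    subst this
    have : (B ^ (2*m)) 0 u.succ = 0 := by
      rw [hentry, (rowpow A hA h1 m).1]
      simp [Pi.single_apply, Fin.succ_ne_zero]
    rw [hf]
    simp [smul_pow, Matrix.smul_apply, this]
  have hinj : Function.Injective (fun m : ℕ => 2*m+1) := fun a b h => by simpa using h
  have hsum3 : HasSum (fun m : ℕ => f (2*m+1)) (NormedSpace.exp (c • B) 0 u.succ) :=
    (hinj.hasSum_iff hvanish).mpr hsum2
  have hsin : HasSum (fun m : ℕ => -(Complex.I / s) * ((-1 : ℂ)^m * (s * t)^(2*m+1) / (Nat.factorial (2*m+1) : ℂ)))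
      (-(Complex.I / s) * Complex.sin (s * t)) :=
    (Complex.hasSum_sin (s * t)).mul_left _
  have hval : NormedSpace.exp (c • B) 0 u.succ = -(Complex.I / s) * Complex.sin (s * t) := by
    refine hsum3.unique ?_
    have he : (fun m : ℕ => f (2*m+1))
        = fun m : ℕ => -(Complex.I / s) * ((-1 : ℂ)^m * (s * t)^(2*m+1) / (Nat.factorial (2*m+1) : ℂ)) :=
      funext heq
    rw [he]
    exact hsin
  have : (NormedSpace.exp (c • B) *ᵥ Pi.single u.succ 1) 0
      = NormedSpace.exp (c • B) 0 u.succ := by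
    simp [Matrix.mulVec_single]
  rw [this, hval, hsdef]
  rw [← Complex.ofReal_mul, ← Complex.ofReal_sin]
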